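/- Let Σ be an n×n real positive definite matrix, let x, a, c ∈ [n] be distinct indices and B ⊆ [n] ∖ {x,a,c}. If the partial covariance σ_{x,c·({a}∪B)} = 0, then ρ_{x,c·B} = ρ_{x,a·B} · ρ_{a,c·B}, and consequently |ρ_{x,c·B}| ≤ |ρ_{x,a·B}|. -/

import Mathlib

open Matrix MvPolynomial

namespace CI

/-- A directed acyclic graph on vertex set `Fin n`. -/
structure DAG (n : ℕ) where
  E : Finset (Fin n × Fin n)
  acyclic : ∀ v : Fin n, ¬ Relation.TransGen (fun a b => (a, b) ∈ E) v v

variable {n : ℕ}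

/-- `d` is a descendant of `v` (every vertex is a descendant of itself). -/
def DAG.desc (G : DAG n) (v d : Fin n) : Prop :=
  Relation.ReflTransGen (fun a b => (a, b) ∈ G.E) v d

/-- An (undirected) path in a DAG from `i` to `j`, encoded by its length and a
vertex function which is constant past the end of the path. -/
structure GPath (G : DAG n) (i j : Fin n) where
  len : ℕ
  v : ℕ → Fin n
  start_eq : v 0 = i
  end_eq : v len = j
  inj : ∀ s t : ℕ, s ≤ len → t ≤ len → v s = v t → s = t
  adj : ∀ t : ℕ, t < len → (v t, v (t + 1)) ∈ G.E ∨ (v (t + 1), v t) ∈ G.E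
  stable : ∀ t : ℕ, len ≤ t → v t = v len

namespace GPath

variable {G : DAG n} {i j : Fin n}

/-- The interior vertex at position `t` is a collider on the path. -/
def IsCollider (p : GPath G i j) (t : ℕ) : Prop :=
  0 < t ∧ t < p.len ∧ (p.v (t - 1), p.v t) ∈ G.E ∧ (p.v (t + 1), p.v t) ∈ G.E

/-- `x` lies on the path `p`. -/
def onPath (p : GPath G i j) (x : Fin n) : Prop := ∃ t ≤ p.len, p.v t = x

/-- The path `p` is d-connecting given `K`. -/
def DConn (p : GPath G i j) (K : Finset (Fin n)) : Prop :=
  (∀ t : ℕ, 0 < t → t < p.len → ¬ p.IsCollider t → p.v t ∉ K) ∧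
  (∀ t : ℕ, p.IsCollider t → ∃ d ∈ K, G.desc (p.v t) d)

end GPath

/-- `K` d-separates `i` and `j` in `G`. -/
def DAG.dSep (G : DAG n) (i j : Fin n) (K : Finset (Fin n)) : Prop :=
  ∀ p : GPath G i j, ¬ p.DConn K

/-- `C` d-separates the sets `A` and `B` in `G`. -/
def DAG.dSepSets (G : DAG n) (A B C : Finset (Fin n)) : Prop :=
  ∀ a ∈ A, ∀ b ∈ B, ∀ p : GPath G a b, ¬ p.DConn C

/-- The parameterization `φ_G(Λ, Ω) = (I - Λ)^{-T} Ω (I - Λ)^{-1}`. -/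
noncomputable def phi (Λ : Matrix (Fin n) (Fin n) ℝ) (ω : Fin n → ℝ) :
    Matrix (Fin n) (Fin n) ℝ :=
  ((1 - Λ)⁻¹)ᵀ * Matrix.diagonal ω * (1 - Λ)⁻¹

/-- `(Λ, ω)` is a valid parameter for the DAG `G`. -/
def IsParam (G : DAG n) (Λ : Matrix (Fin n) (Fin n) ℝ) (ω : Fin n → ℝ) : Prop :=
  (∀ a b : Fin n, (a, b) ∉ G.E → Λ a b = 0) ∧ ∀ a : Fin n, 0 < ω a

/-- The Gaussian DAG model `M_G`: the image of `φ_G` over the parameter space. -/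
def gaussianModel (G : DAG n) : Set (Matrix (Fin n) (Fin n) ℝ) :=
  { M | ∃ Λ ω, IsParam G Λ ω ∧ M = phi Λ ω }

/-- The determinant of the submatrix of `M` with rows `A` and columns `B`
(in the increasing order of indices); junk value `0` if `A` and `B` have
different cardinality. -/
noncomputable def subDet {α : Type} [CommRing α] (M : Matrix (Fin n) (Fin n) α)
    (A B : Finset (Fin n)) : α :=
  if h : B.card = A.card then
    Matrix.det (Matrix.of fun p q : Fin A.card =>
      M ((A.orderIsoOfFin rfl p).1) ((B.orderIsoOfFin h q).1))
  else 0

/-- The model `M_{G, i ⊥⊥ j | K}`. -/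
noncomputable def modelCI (G : DAG n) (i j : Fin n) (K : Finset (Fin n)) :
    Set (Matrix (Fin n) (Fin n) ℝ) :=
  { M | M ∈ gaussianModel G ∧ subDet M (insert i K) (insert j K) = 0 }

/-- The polynomial ring `R` in the variables `λ_{ab}` ((a,b) ∈ E) and `ω_a`. -/
abbrev PolyR (n : ℕ) := MvPolynomial (Fin n × Fin n ⊕ Fin n) ℝ

/-- The matrix `L` of indeterminates `λ_{ab}` for edges `(a,b) ∈ E`. -/
noncomputable def Lmat (G : DAG n) : Matrix (Fin n) (Fin n) (PolyR n) :=
  Matrix.of fun a b => if (a, b) ∈ G.E then X (Sum.inl (a, b)) else 0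

/-- The matrix of polynomials `S = (I - L)^{-T} W (I - L)^{-1}`. -/
noncomputable def Smat (G : DAG n) : Matrix (Fin n) (Fin n) (PolyR n) :=
  ((1 - Lmat G)⁻¹)ᵀ * Matrix.diagonal (fun a => X (Sum.inr a)) * (1 - Lmat G)⁻¹

/-- Evaluation of a polynomial in `R` at a parameter point `(Λ, ω)`. -/
noncomputable def evalParam (Λ : Matrix (Fin n) (Fin n) ℝ) (ω : Fin n → ℝ) :
    PolyR n →+* ℝ :=
  MvPolynomial.eval (Sum.elim (fun e : Fin n × Fin n => Λ e.1 e.2) ω)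

/-- `p` is a monomial: a nonzero scalar multiple of a single power product. -/
def IsMonomial (p : PolyR n) : Prop := p.support.card = 1

/-- A directed path in a DAG from `s` to `t`, encoded as for `GPath`. -/
structure DiPath (G : DAG n) (s t : Fin n) where
  len : ℕ
  v : ℕ → Fin n
  start_eq : v 0 = s
  end_eq : v len = t
  inj : ∀ a b : ℕ, a ≤ len → b ≤ len → v a = v b → a = b
  adj : ∀ a : ℕ, a < len → (v a, v (a + 1)) ∈ G.E
  stable : ∀ a : ℕ, len ≤ a → v a = v len

namespace DiPath

variable {G : DAG n} {s t : Fin n}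

/-- `x` lies on the directed path `p`. -/
def onPath (p : DiPath G s t) (x : Fin n) : Prop := ∃ a ≤ p.len, p.v a = x

/-- The directed path `p` traverses the edge `e`. -/
def hasEdge (p : DiPath G s t) (e : Fin n × Fin n) : Prop :=
  ∃ a < p.len, p.v a = e.1 ∧ p.v (a + 1) = e.2

end DiPath

/-- A trek: a pair of directed paths with a common top vertex. -/
structure Trek (G : DAG n) where
  top : Fin n
  left : Fin n
  right : Fin n
  L : DiPath G top left
  R : DiPath G top right

/-- The trek `trk` traverses the edge `e` (on its left or right part). -/
def Trek.hasEdge {G : DAG n} (trk : Trek G) (e : Fin n × Fin n) : Prop :=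
  trk.L.hasEdge e ∨ trk.R.hasEdge e

/-- A trek system from `A` to `B`: a set of treks whose left endpoints exhaust `A`
and whose right endpoints exhaust `B`. -/
def IsTrekSystem (G : DAG n) (A B : Finset (Fin n)) (T : Set (Trek G)) : Prop :=
  Set.BijOn (fun trk => trk.left) T ↑A ∧ Set.BijOn (fun trk => trk.right) T ↑B

/-- The trek system `T` has no sided intersection. -/
def NoSidedIntersection {G : DAG n} (T : Set (Trek G)) : Prop :=
  (∀ t₁ ∈ T, ∀ t₂ ∈ T, t₁ ≠ t₂ → ∀ x : Fin n, t₁.L.onPath x → ¬ t₂.L.onPath x) ∧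
  (∀ t₁ ∈ T, ∀ t₂ ∈ T, t₁ ≠ t₂ → ∀ x : Fin n, t₁.R.onPath x → ¬ t₂.R.onPath x)

/-- The product of the edge variables traversed by a directed path. -/
noncomputable def diMon {G : DAG n} {s t : Fin n} (p : DiPath G s t) : PolyR n :=
  ∏ a ∈ Finset.range p.len, X (Sum.inl (p.v a, p.v (a + 1)))

/-- The trek monomial `m_T = ω_s ∏ λ_{kl}`. -/
noncomputable def trekMon {G : DAG n} (trk : Trek G) : PolyR n :=
  X (Sum.inr trk.top) * diMon trk.L * diMon trk.R

/-- The trek system monomial: product of the trek monomials of its treks. -/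
noncomputable def trekSysMon {G : DAG n} (T : Set (Trek G)) : PolyR n :=
  ∏ᶠ trk ∈ T, trekMon trk

/-- Partial covariance `σ_{x,a·B}`. -/
noncomputable def pCov (M : Matrix (Fin n) (Fin n) ℝ) (x a : Fin n)
    (B : Finset (Fin n)) : ℝ :=
  M x a - ∑ p : {b : Fin n // b ∈ B}, ∑ q : {b : Fin n // b ∈ B},
      M x p.1 *
        (M.submatrix (fun b : {b : Fin n // b ∈ B} => b.1)
          (fun b : {b : Fin n // b ∈ B} => b.1))⁻¹ p q *
      M q.1 a

/-- Partial correlation `ρ_{x,a·B}`. -/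
noncomputable def pCor (M : Matrix (Fin n) (Fin n) ℝ) (x a : Fin n)
    (B : Finset (Fin n)) : ℝ :=
  pCov M x a B / Real.sqrt (pCov M x x B * pCov M a a B)

/-- The DAG obtained by deleting the edge `(a, b)`. -/
def DAG.deleteEdge (G : DAG n) (a b : Fin n) : DAG n where
  E := G.E.erase (a, b)
  acyclic := fun v hv =>
    G.acyclic v (Relation.TransGen.mono (fun _ _ hxy => Finset.mem_of_mem_erase hxy) _ _ hv)

/-- The Gaussian CI statement `A ⊥⊥_Σ B | C`: all `(|C|+1) × (|C|+1)` minors of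
the submatrix with rows `A ∪ C` and columns `B ∪ C` vanish. -/
noncomputable def ciHolds (M : Matrix (Fin n) (Fin n) ℝ)
    (A B C : Finset (Fin n)) : Prop :=
  ∀ A' B' : Finset (Fin n), A' ⊆ A ∪ C → B' ⊆ B ∪ C →
    A'.card = C.card + 1 → B'.card = C.card + 1 → subDet M A' B' = 0

/-- A set of CI statements over `[4]` is gaussoid-closed. -/
def GaussoidClosed (𝒢 : Fin 4 → Fin 4 → Finset (Fin 4) → Prop) : Prop :=
  (∀ a b C, 𝒢 a b C → 𝒢 b a C) ∧
  ∀ i j k : Fin 4, ∀ L : Finset (Fin 4),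
    i ≠ j → i ≠ k → j ≠ k → i ∉ L → j ∉ L → k ∉ L →
      ((𝒢 i j L → 𝒢 i k (insert j L) → 𝒢 i k L ∧ 𝒢 i j (insert k L)) ∧
       (𝒢 i j (insert k L) → 𝒢 i k (insert j L) → 𝒢 i j L ∧ 𝒢 i k L) ∧
       (𝒢 i j L → 𝒢 i k L → 𝒢 i j (insert k L) ∧ 𝒢 i k (insert j L)) ∧
       (𝒢 i j L → 𝒢 i j (insert k L) → 𝒢 i k L ∨ 𝒢 j k L))

end CI


section S12Aux

open Matrix CI

variable {n : ℕ} {M : Matrix (Fin n) (Fin n) ℝ}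

private lemma msym (hM : M.IsHermitian) (i j : Fin n) : M j i = M i j := by
  have := congrFun (congrFun hM i) j
  simpa [Matrix.conjTranspose_apply] using this

private lemma Qsym (hM : M.IsHermitian) (u v : Fin n → ℝ) :
    u ⬝ᵥ M *ᵥ v = v ⬝ᵥ M *ᵥ u := by
  simp only [dotProduct, Matrix.mulVec, dotProduct, Finset.mul_sum]
  rw [Finset.sum_comm]
  exact Finset.sum_congr rfl fun j _ => Finset.sum_congr rfl fun i _ => by
    rw [msym hM i j]; ring

private def IsRes (M : Matrix (Fin n) (Fin n) ℝ) (B : Finset (Fin n)) (x : Fin n)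
    (r : Fin n → ℝ) : Prop :=
  r x = 1 ∧ (∀ j, j ≠ x → j ∉ B → r j = 0) ∧ ∀ b ∈ B, (M *ᵥ r) b = 0

private lemma sum_ext (B : Finset (Fin n)) (v : {b : Fin n // b ∈ B} → ℝ) (g : Fin n → ℝ) :
      (∑ j, (if h : j ∈ B then v ⟨j, h⟩ else 0) * g j) =
        ∑ p : {b : Fin n // b ∈ B}, v p * g p.1 := by
  have h1 : (∑ j, (if h : j ∈ B then v ⟨j, h⟩ else 0) * g j)
      = ∑ j ∈ B, (if h : j ∈ B then v ⟨j, h⟩ else 0) * g j :=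
    (Finset.sum_subset B.subset_univ (fun j _ hj => by simp [hj])).symm
  rw [h1, Finset.sum_subtype B (fun _ => Iff.rfl)]
  exact Finset.sum_congr rfl fun p _ => by simp

private lemma posdef_sub (hM : M.PosDef) (B : Finset (Fin n)) :
    (M.submatrix (fun b : {b : Fin n // b ∈ B} => b.1)
      (fun b : {b : Fin n // b ∈ B} => b.1)).PosDef := by
  refine Matrix.PosDef.of_dotProduct_mulVec_pos (hM.1.submatrix _) (fun v hv => ?_)
  set w : Fin n → ℝ := fun j => if h : j ∈ B then v ⟨j, h⟩ else 0 with hw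
  have hwne : w ≠ 0 := by
    intro h0
    apply hv
    funext p
    have := congrFun h0 p.1
    simpa [hw, p.2] using this
  have hpos := hM.dotProduct_mulVec_pos hwne
  rw [star_trivial] at hpos ⊢
  have heq : v ⬝ᵥ ((M.submatrix (fun b : {b : Fin n // b ∈ B} => b.1)
      (fun b : {b : Fin n // b ∈ B} => b.1)) *ᵥ v) = w ⬝ᵥ M *ᵥ w := by
    show (∑ p : {b : Fin n // b ∈ B}, v p * _) = ∑ j, w j * (M *ᵥ w) j
    rw [sum_ext B v (fun j => (M *ᵥ w) j)]
    refine Finset.sum_congr rfl fun p _ => ?_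
    congr 1
    show (∑ q : {b : Fin n // b ∈ B}, M p.1 q.1 * v q) = ∑ k, M p.1 k * w k
    rw [show (∑ k, M p.1 k * w k) = ∑ k, w k * M p.1 k from
      Finset.sum_congr rfl fun k _ => mul_comm _ _]
    rw [sum_ext B v (fun k => M p.1 k)]
    exact Finset.sum_congr rfl fun q _ => mul_comm _ _
  rw [heq]; exact hpos


private lemma exists_res (hM : M.PosDef) (B : Finset (Fin n)) (x : Fin n) (hx : x ∉ B) :
    ∃ r, IsRes M B x r ∧ ∀ c, pCov M x c B = r ⬝ᵥ M *ᵥ Pi.single c 1 := by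
  classical
  set MB : Matrix {b : Fin n // b ∈ B} {b : Fin n // b ∈ B} ℝ :=
    M.submatrix (fun b : {b : Fin n // b ∈ B} => b.1)
      (fun b : {b : Fin n // b ∈ B} => b.1) with hMBdef
  have hMB : MB.PosDef := posdef_sub hM B
  have hdet : IsUnit MB.det := isUnit_iff_ne_zero.2 hMB.det_pos.ne'
  have hinv : MB * MB⁻¹ = 1 := Matrix.mul_nonsing_inv _ hdet
  have hsymMB : MBᵀ = MB := by
    ext p q
    show M q.1 p.1 = M p.1 q.1
    exact msym hM.1 p.1 q.1
  have h2t : (MB⁻¹)ᵀ = MB⁻¹ := by rw [Matrix.transpose_nonsing_inv, hsymMB]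
  have hinvsym : ∀ p q, MB⁻¹ p q = MB⁻¹ q p := by
    intro p q
    conv_lhs => rw [← h2t]
    rfl
  set rB : {b : Fin n // b ∈ B} → ℝ := fun p => -(MB⁻¹ *ᵥ (fun q => M q.1 x)) p with hrB
  set w : Fin n → ℝ := fun j => if h : j ∈ B then rB ⟨j, h⟩ else 0 with hw
  set r : Fin n → ℝ := Pi.single x 1 + w with hr
  have hwx : w x = 0 := by simp [hw, hx]
  refine ⟨r, ⟨?_, ?_, ?_⟩, ?_⟩
  · simp [hr, hwx]
  · intro j hjx hjB
    simp [hr, hw, hjB, Pi.single_eq_of_ne hjx]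
  · intro b hb
    rw [hr, Matrix.mulVec_add]
    have h1 : (M *ᵥ Pi.single x 1) b = M b x := by simp
    have hu : MB *ᵥ (MB⁻¹ *ᵥ (fun q : {b : Fin n // b ∈ B} => M q.1 x)) =
        (fun q : {b : Fin n // b ∈ B} => M q.1 x) := by
      rw [Matrix.mulVec_mulVec, hinv, Matrix.one_mulVec]
    have h2 : (M *ᵥ w) b = -(M b x) := by
      show (∑ k, M b k * w k) = -(M b x)
      rw [show (∑ k, M b k * w k) = ∑ k, w k * M b k from
        Finset.sum_congr rfl fun k _ => mul_comm _ _]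
      rw [hw, sum_ext B rB (fun k => M b k)]
      have hterm : ∀ p : {b : Fin n // b ∈ B}, rB p * M b p.1
          = -(MB ⟨b, hb⟩ p * (MB⁻¹ *ᵥ (fun q => M q.1 x)) p) := fun p => by
        show (-(MB⁻¹ *ᵥ (fun q => M q.1 x)) p) * M b p.1 = _
        show _ = -(M b p.1 * (MB⁻¹ *ᵥ (fun q => M q.1 x)) p)
        ring
      rw [Finset.sum_congr rfl (fun p _ => hterm p), Finset.sum_neg_distrib]
      have h3 : (∑ p, MB ⟨b, hb⟩ p * (MB⁻¹ *ᵥ (fun q => M q.1 x)) p)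
          = (MB *ᵥ (MB⁻¹ *ᵥ (fun q => M q.1 x))) ⟨b, hb⟩ := rfl
      rw [h3, hu]
    rw [Pi.add_apply, h1, h2]
    ring
  · intro c
    have hMv : (M *ᵥ Pi.single c 1) = fun j => M j c := by ext j; simp
    rw [hMv]
    show pCov M x c B = ∑ j, r j * M j c
    have hsplit : (∑ j, r j * M j c)
        = (∑ j, (Pi.single x 1 : Fin n → ℝ) j * M j c) + ∑ j, w j * M j c := by
      rw [← Finset.sum_add_distrib]
      refine Finset.sum_congr rfl fun j _ => by rw [hr, Pi.add_apply]; ring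
    have h1 : (∑ j, (Pi.single x 1 : Fin n → ℝ) j * M j c) = M x c := by
      show (Pi.single x 1 : Fin n → ℝ) ⬝ᵥ (fun j => M j c) = M x c
      rw [single_dotProduct, one_mul]
    have h2 : (∑ j, w j * M j c) = ∑ p : {b : Fin n // b ∈ B}, rB p * M p.1 c := by
      rw [hw]; exact sum_ext B rB (fun j => M j c)
    rw [hsplit, h1, h2]
    show M x c - (∑ p : {b : Fin n // b ∈ B}, ∑ q : {b : Fin n // b ∈ B},
        M x p.1 * MB⁻¹ p q * M q.1 c) = M x c + ∑ p, rB p * M p.1 c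
    have hA : (∑ p : {b : Fin n // b ∈ B}, rB p * M p.1 c)
        = -∑ p : {b : Fin n // b ∈ B}, ∑ q : {b : Fin n // b ∈ B},
            MB⁻¹ p q * M q.1 x * M p.1 c := by
      rw [← Finset.sum_neg_distrib]
      refine Finset.sum_congr rfl fun p _ => ?_
      have h4 : rB p = -∑ q, MB⁻¹ p q * M q.1 x := rfl
      rw [h4, neg_mul, Finset.sum_mul]
    have hswap : (∑ p : {b : Fin n // b ∈ B}, ∑ q : {b : Fin n // b ∈ B},
          MB⁻¹ p q * M q.1 x * M p.1 c)
        = ∑ p : {b : Fin n // b ∈ B}, ∑ q : {b : Fin n // b ∈ B},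
            M x p.1 * MB⁻¹ p q * M q.1 c := by
      rw [Finset.sum_comm]
      refine Finset.sum_congr rfl fun p _ => Finset.sum_congr rfl fun q _ => ?_
      rw [hinvsym q p, msym hM.1 x p.1]
      ring
    rw [hA, hswap]
    ring

private lemma isRes_unique (hM : M.PosDef) {B : Finset (Fin n)} {x : Fin n}
    {r r' : Fin n → ℝ} (h1 : IsRes M B x r) (h2 : IsRes M B x r') : r = r' := by
  by_contra hne
  have hd : r - r' ≠ 0 := sub_ne_zero.2 hne
  have hpos := hM.dotProduct_mulVec_pos hd
  rw [star_trivial] at hpos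
  have hz : (r - r') ⬝ᵥ M *ᵥ (r - r') = 0 := by
    show ∑ j, (r - r') j * (M *ᵥ (r - r')) j = 0
    refine Finset.sum_eq_zero fun j _ => ?_
    by_cases hj : j ∈ B
    · have hmz : (M *ᵥ (r - r')) j = 0 := by
        rw [Matrix.mulVec_sub, Pi.sub_apply, h1.2.2 j hj, h2.2.2 j hj, sub_zero]
      rw [hmz, mul_zero]
    · by_cases hjx : j = x
      · subst hjx; rw [Pi.sub_apply, h1.1, h2.1, sub_self, zero_mul]
      · rw [Pi.sub_apply, h1.2.1 j hjx hj, h2.2.1 j hjx hj, sub_zero, zero_mul]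
  rw [hz] at hpos; exact lt_irrefl _ hpos

private lemma Q_supported (hM : M.IsHermitian) {B : Finset (Fin n)} {x : Fin n}
    {r : Fin n → ℝ} (hr : IsRes M B x r) {s : Fin n → ℝ}
    (hs : ∀ j ∉ B, s j = 0) : r ⬝ᵥ M *ᵥ s = 0 := by
  rw [Qsym hM]
  show ∑ j, s j * (M *ᵥ r) j = 0
  refine Finset.sum_eq_zero fun j _ => ?_
  by_cases hj : j ∈ B
  · rw [hr.2.2 j hj, mul_zero]
  · rw [hs j hj, zero_mul]

private lemma pCov_res (hM : M.PosDef) {B : Finset (Fin n)} {x : Fin n} (hx : x ∉ B)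
    {r : Fin n → ℝ} (hr : IsRes M B x r) (c : Fin n) :
    pCov M x c B = r ⬝ᵥ M *ᵥ Pi.single c 1 := by
  obtain ⟨r0, hr0, hf⟩ := exists_res hM B x hx
  rw [hf c, isRes_unique hM hr hr0]

private lemma Q_res (hM : M.PosDef) {B : Finset (Fin n)} {x c : Fin n}
    {r r' : Fin n → ℝ} (hr : IsRes M B x r) (hr' : IsRes M B c r') :
    r ⬝ᵥ M *ᵥ r' = r ⬝ᵥ M *ᵥ Pi.single c 1 := by
  set s : Fin n → ℝ := r' - Pi.single c 1 with hsdef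
  have hs : ∀ j ∉ B, s j = 0 := by
    intro j hj
    by_cases hjc : j = c
    · subst hjc; simp [hsdef, hr'.1]
    · simp [hsdef, Pi.single_eq_of_ne hjc, hr'.2.1 j hjc hj]
  have h0 : r ⬝ᵥ M *ᵥ s = 0 := Q_supported hM.1 hr hs
  have hre : r' = Pi.single c 1 + s := by rw [hsdef, add_sub_cancel]
  rw [hre, Matrix.mulVec_add, dotProduct_add, h0, add_zero]


end S12Aux

open CI in
/-- vanishing partial covariance given `{a} ∪ B` factors the
partial correlation and bounds it. -/
theorem statement12 {n : ℕ} (M : Matrix (Fin n) (Fin n) ℝ) (hM : M.PosDef)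
    (x a c : Fin n) (hxa : x ≠ a) (hxc : x ≠ c) (hac : a ≠ c)
    (B : Finset (Fin n)) (hxB : x ∉ B) (haB : a ∉ B) (hcB : c ∉ B)
    (h : pCov M x c (insert a B) = 0) :
    pCor M x c B = pCor M x a B * pCor M a c B ∧
      |pCor M x c B| ≤ |pCor M x a B| := by
  obtain ⟨rx, hrx, _⟩ := exists_res hM B x hxB
  obtain ⟨ra, hra, _⟩ := exists_res hM B a haB
  obtain ⟨rc, hrc, _⟩ := exists_res hM B c hcB
  -- identifications of partial covariances with Q-values
  have hfxa : pCov M x a B = rx ⬝ᵥ M *ᵥ ra := by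
    rw [pCov_res hM hxB hrx a, ← Q_res hM hrx hra]
  have hfxc : pCov M x c B = rx ⬝ᵥ M *ᵥ rc := by
    rw [pCov_res hM hxB hrx c, ← Q_res hM hrx hrc]
  have hfac : pCov M a c B = ra ⬝ᵥ M *ᵥ rc := by
    rw [pCov_res hM haB hra c, ← Q_res hM hra hrc]
  have hfaa : pCov M a a B = ra ⬝ᵥ M *ᵥ ra := by
    rw [pCov_res hM haB hra a, ← Q_res hM hra hra]
  have hfxx : pCov M x x B = rx ⬝ᵥ M *ᵥ rx := by
    rw [pCov_res hM hxB hrx x, ← Q_res hM hrx hrx]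
  have hfcc : pCov M c c B = rc ⬝ᵥ M *ᵥ rc := by
    rw [pCov_res hM hcB hrc c, ← Q_res hM hrc hrc]
  -- positivity
  have hQpos : ∀ (i : Fin n) (r : Fin n → ℝ), r i = 1 → 0 < r ⬝ᵥ M *ᵥ r := by
    intro i r hri
    have hne : r ≠ 0 := fun h0 => by simp [h0] at hri
    have := hM.dotProduct_mulVec_pos hne
    rwa [star_trivial] at this
  have haa : 0 < pCov M a a B := hfaa ▸ hQpos a ra hra.1
  have hxx : 0 < pCov M x x B := hfxx ▸ hQpos x rx hrx.1
  have hcc : 0 < pCov M c c B := hfcc ▸ hQpos c rc hrc.1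
  -- the residual of x given insert a B
  set lam : ℝ := pCov M x a B / pCov M a a B with hlam
  have hxaB : x ∉ insert a B := by simp [Finset.mem_insert, hxa, hxB]
  have hres' : IsRes M (insert a B) x (rx - lam • ra) := by
    refine ⟨?_, ?_, ?_⟩
    · have hrax : ra x = 0 := hra.2.1 x hxa hxB
      simp [hrx.1, hrax]
    · intro j hjx hj
      rw [Finset.mem_insert, not_or] at hj
      simp [hrx.2.1 j hjx hj.2, hra.2.1 j hj.1 hj.2]
    · intro b hb
      rw [Finset.mem_insert] at hb
      rw [Matrix.mulVec_sub, Matrix.mulVec_smul, Pi.sub_apply, Pi.smul_apply,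
        smul_eq_mul]
      rcases hb with hb | hb
      · subst hb
        have h1 : (M *ᵥ rx) b = pCov M x b B := by
          have e1 : (M *ᵥ rx) b = (Pi.single b 1 : Fin n → ℝ) ⬝ᵥ (M *ᵥ rx) := by
            rw [single_dotProduct, one_mul]
          rw [e1, Qsym hM.1, ← pCov_res hM hxB hrx b]
        have h2 : (M *ᵥ ra) b = pCov M b b B := by
          have e1 : (M *ᵥ ra) b = (Pi.single b 1 : Fin n → ℝ) ⬝ᵥ (M *ᵥ ra) := by
            rw [single_dotProduct, one_mul]
          rw [e1, Qsym hM.1, ← pCov_res hM haB hra b]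
        rw [h1, h2, hlam, div_mul_cancel₀ _ haa.ne', sub_self]
      · rw [hra.2.2 b hb, hrx.2.2 b hb, mul_zero, sub_zero]
  -- key factorization
  have key : pCov M x c B = pCov M x a B * pCov M a c B / pCov M a a B := by
    have e1 : pCov M x c (insert a B) = (rx - lam • ra) ⬝ᵥ M *ᵥ Pi.single c 1 :=
      pCov_res hM hxaB hres' c
    rw [sub_dotProduct, smul_dotProduct, smul_eq_mul,
      ← pCov_res hM hxB hrx c, ← pCov_res hM haB hra c] at e1
    rw [h] at e1
    have : pCov M x c B = lam * pCov M a c B := by linarith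
    rw [this, hlam]; ring
  -- Cauchy-Schwarz
  have hcs : (pCov M a c B) ^ 2 ≤ pCov M a a B * pCov M c c B := by
    have hps := hM.posSemidef.dotProduct_mulVec_nonneg ((pCov M a a B) • rc - (pCov M a c B) • ra)
    rw [star_trivial] at hps
    have hsymca : rc ⬝ᵥ M *ᵥ ra = ra ⬝ᵥ M *ᵥ rc := Qsym hM.1 rc ra
    rw [Matrix.mulVec_sub, Matrix.mulVec_smul, Matrix.mulVec_smul,
      sub_dotProduct, smul_dotProduct, smul_dotProduct,
      dotProduct_sub, dotProduct_sub, dotProduct_smul,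
      dotProduct_smul, dotProduct_smul, dotProduct_smul,
      smul_eq_mul, smul_eq_mul, smul_eq_mul, smul_eq_mul] at hps
    rw [hsymca, ← hfaa, ← hfac, ← hfcc] at hps
    simp only [smul_eq_mul] at hps
    nlinarith [haa, hps]
  -- sqrt algebra
  have hsq : Real.sqrt (pCov M x x B * pCov M a a B) *
      Real.sqrt (pCov M a a B * pCov M c c B) =
      pCov M a a B * Real.sqrt (pCov M x x B * pCov M c c B) := by
    rw [← Real.sqrt_mul (by positivity),
      show pCov M x x B * pCov M a a B * (pCov M a a B * pCov M c c B)
        = pCov M a a B ^ 2 * (pCov M x x B * pCov M c c B) by ring,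
      Real.sqrt_mul (by positivity), Real.sqrt_sq haa.le]
  have heq : pCor M x c B = pCor M x a B * pCor M a c B := by
    simp only [pCor]
    rw [key, div_div, div_mul_div_comm, hsq]
  refine ⟨heq, ?_⟩
  have hS : 0 < Real.sqrt (pCov M a a B * pCov M c c B) :=
    Real.sqrt_pos.2 (by positivity)
  have hle : |pCor M a c B| ≤ 1 := by
    show |pCov M a c B / Real.sqrt (pCov M a a B * pCov M c c B)| ≤ 1
    rw [abs_div, abs_of_pos hS, div_le_one hS]
    have := Real.sqrt_le_sqrt hcs
    rwa [Real.sqrt_sq_eq_abs] at this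
  calc |pCor M x c B| = |pCor M x a B| * |pCor M a c B| := by rw [heq, abs_mul]
    _ ≤ |pCor M x a B| * 1 := mul_le_mul_of_nonneg_left hle (abs_nonneg _)
    _ = |pCor M x a B| := mul_one _
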